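/- Let G be a finite graph with no odd induced cycles in which C₆ does not embed as an induced subgraph. If S is a finite independent set of vertices of size k+1 (k ≥ 2) such that every k-subset of S has a common neighbour but S itself has no common neighbour, then G contains an induced copy of the bipartite complement of a perfect matching on parts of size k+1, and in particular an induced 6-cycle — contradiction. Hence in such a graph, if every pair of vertices in an independent set S has a common neighbour and the above iteration applies, then all of S has a common neighbour. -/

import Mathlib

set_option maxRecDepth 8000
set_option maxHeartbeats 1000000


/-- `G` has an induced cycle of length `k`: there are `k` distinct vertices
whose induced subgraph is exactly the `k`-cycle (no chords). -/
def HasInducedCycle {α : Type*} (G : SimpleGraph α) (k : ℕ) : Prop :=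
  ∃ f : Fin k ↪ α, ∀ i j : Fin k,
    G.Adj (f i) (f j) ↔ ((i.val + 1) % k = j.val ∨ (j.val + 1) % k = i.val)

lemma triangle_induced {α : Type*} {G : SimpleGraph α} {a b c : α}
    (hab : G.Adj a b) (hbc : G.Adj b c) (hac : G.Adj a c) :
    HasInducedCycle G 3 := by
  have hne1 := hab.ne
  have hne2 := hbc.ne
  have hne3 := hac.ne
  have h1 := hab.symm
  have h2 := hbc.symm
  have h3 := hac.symm
  refine ⟨⟨![a, b, c], ?_⟩, ?_⟩
  · intro i j h
    fin_cases i <;> fin_cases j <;> simp_all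
  · change ∀ i j : Fin 3, G.Adj (![a, b, c] i) (![a, b, c] j) ↔ _
    intro i j
    fin_cases i <;> fin_cases j <;> simp_all [G.irrefl]

/-- In a finite graph with no odd induced cycles and no induced 6-cycle, if
`S` is an independent set of size `k + 1` (`k ≥ 2`) such that every `k`-subset
of `S` has a common neighbour, then `S` itself has a common neighbour
(otherwise the distinct common neighbours together with `S` would form an
induced copy of the bipartite complement of a perfect matching, hence an
induced 6-cycle). -/
theorem common_neighbour_of_whole_set {α : Type*} [Fintype α]
    (G : SimpleGraph α)
    (hodd : ∀ m, 3 ≤ m → Odd m → ¬ HasInducedCycle G m)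
    (h6 : ¬ HasInducedCycle G 6)
    (k : ℕ) (hk : 2 ≤ k) (S : Finset α) (hcard : S.card = k + 1)
    (hind : ∀ x ∈ S, ∀ y ∈ S, ¬ G.Adj x y)
    (hsub : ∀ T ⊆ S, T.card = k → ∃ w, ∀ x ∈ T, G.Adj w x) :
    ∃ w, ∀ x ∈ S, G.Adj w x := by
  classical
  by_contra hno
  -- for every s ∈ S there's a vertex adjacent to everything in S except s
  have hW : ∀ s ∈ S, ∃ w, (∀ x ∈ S, x ≠ s → G.Adj w x) ∧ ¬ G.Adj w s := by
    intro s hs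
    obtain ⟨w, hw⟩ := hsub (S.erase s) (Finset.erase_subset s S)
      (by rw [Finset.card_erase_of_mem hs, hcard]; omega)
    refine ⟨w, fun x hx hxs => hw x (Finset.mem_erase.2 ⟨hxs, hx⟩), fun hws => ?_⟩
    exact hno ⟨w, fun x hx => by
      by_cases hxs : x = s
      · subst hxs; exact hws
      · exact hw x (Finset.mem_erase.2 ⟨hxs, hx⟩)⟩
  -- pick three distinct elements of S
  obtain ⟨a, ha⟩ : S.Nonempty := by rw [← Finset.card_pos, hcard]; omega
  obtain ⟨b, hb⟩ : (S.erase a).Nonempty := by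
    rw [← Finset.card_pos, Finset.card_erase_of_mem ha, hcard]; omega
  obtain ⟨c, hc⟩ : ((S.erase a).erase b).Nonempty := by
    rw [← Finset.card_pos, Finset.card_erase_of_mem hb,
      Finset.card_erase_of_mem ha, hcard]; omega
  obtain ⟨hba, hbS⟩ := Finset.mem_erase.1 hb
  obtain ⟨hcb, hc'⟩ := Finset.mem_erase.1 hc
  obtain ⟨hca, hcS⟩ := Finset.mem_erase.1 hc'
  obtain ⟨wa, hwa, hwa'⟩ := hW a ha
  obtain ⟨wb, hwb, hwb'⟩ := hW b hbS
  obtain ⟨wc, hwc, hwc'⟩ := hW c hcS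
  -- basic adjacencies
  have ab : G.Adj wa b := hwa b hbS hba
  have ac : G.Adj wa c := hwa c hcS hca
  have ba : G.Adj wb a := hwb a ha (Ne.symm hba)
  have bc : G.Adj wb c := hwb c hcS hcb
  have ca : G.Adj wc a := hwc a ha (Ne.symm hca)
  have cb : G.Adj wc b := hwc b hbS (Ne.symm hcb)
  -- witnesses are outside S
  have hwaS : wa ∉ S := fun h => hind wa h b hbS ab
  have hwbS : wb ∉ S := fun h => hind wb h a ha ba
  have hwcS : wc ∉ S := fun h => hind wc h a ha ca
  have hwab : wa ≠ wb := fun h => hwb' (h ▸ ab)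
  have hwac : wa ≠ wc := fun h => hwc' (h ▸ ac)
  have hwbc : wb ≠ wc := fun h => hwc' (h ▸ bc)
  have hodd3 := hodd 3 le_rfl ⟨1, rfl⟩
  -- no edges among the witnesses, else a triangle
  by_cases e1 : G.Adj wa wb
  · exact hodd3 (triangle_induced e1 bc (ac))
  by_cases e2 : G.Adj wa wc
  · exact hodd3 (triangle_induced e2 cb (ab))
  by_cases e3 : G.Adj wb wc
  · exact hodd3 (triangle_induced e3 ca (ba))
  -- now build an induced 6-cycle  a, wb, c, wa, b, wc
  apply h6
  have nab : ¬ G.Adj a b := hind a ha b hbS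
  have nac : ¬ G.Adj a c := hind a ha c hcS
  have nbc : ¬ G.Adj b c := hind b hbS c hcS
  have dista : a ≠ wa := fun h => hwaS (h ▸ ha)
  have distb : b ≠ wb := fun h => hwbS (h ▸ hbS)
  have distc : c ≠ wc := fun h => hwcS (h ▸ hcS)
  have dab : a ≠ wb := fun h => hwbS (h ▸ ha)
  have dac : a ≠ wc := fun h => hwcS (h ▸ ha)
  have dba : b ≠ wa := fun h => hwaS (h ▸ hbS)
  have dbc : b ≠ wc := fun h => hwcS (h ▸ hbS)
  have dca : c ≠ wa := fun h => hwaS (h ▸ hcS)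
  have dcb : c ≠ wb := fun h => hwbS (h ▸ hcS)
  have sab := ab.symm; have sac := ac.symm; have sba := ba.symm
  have sbc := bc.symm; have sca := ca.symm; have scb := cb.symm
  have n1 := dista.symm; have n2 := distb.symm; have n3 := distc.symm
  have n4 := dab.symm; have n5 := dac.symm; have n6 := dba.symm
  have n7 := dbc.symm; have n8 := dca.symm; have n9 := dcb.symm
  have n10 := hba.symm; have n11 := hca.symm; have n12 := hcb.symm
  have n13 := hwab.symm; have n14 := hwac.symm; have n15 := hwbc.symm
  have m1 : ¬ G.Adj b a := fun h => nab h.symm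
  have m2 : ¬ G.Adj c a := fun h => nac h.symm
  have m3 : ¬ G.Adj c b := fun h => nbc h.symm
  have m4 : ¬ G.Adj a wa := fun h => hwa' h.symm
  have m5 : ¬ G.Adj b wb := fun h => hwb' h.symm
  have m6 : ¬ G.Adj c wc := fun h => hwc' h.symm
  have e1' : ¬ G.Adj wb wa := fun h => e1 h.symm
  have e2' : ¬ G.Adj wc wa := fun h => e2 h.symm
  have e3' : ¬ G.Adj wc wb := fun h => e3 h.symm
  have v5 : ![a, wb, c, wa, b, wc] 5 = wc := rfl
  refine ⟨⟨![a, wb, c, wa, b, wc], ?_⟩, ?_⟩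
  · intro i j
    fin_cases i <;> fin_cases j <;> simp [v5] <;> assumption
  · change ∀ i j : Fin 6, G.Adj (![a, wb, c, wa, b, wc] i) (![a, wb, c, wa, b, wc] j) ↔ _
    intro i j
    fin_cases i <;> fin_cases j <;>
      simp [v5, G.irrefl, nab, nac, nbc, m1, m2, m3, m4, m5, m6, hwa', hwb', hwc',
        e1, e2, e3, e1', e2', e3', ab, ac, ba, bc, ca, cb, sab, sac, sba, sbc, sca, scb]
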